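/- Let 0 → F → G → H → 0 be an exact sequence of finite-dimensional vector spaces with dim H = m, and let Λ₁ᵐG* = {α ∈ ΛᵐG* : i(u)i(v)α = 0 for all u, v ∈ F}. Then dim Λ₁ᵐG* = 1 + dim F · dim H. -/

import Mathlib

/-- The subspace `Λ₁ᵐG*` of alternating `m`-forms `α` on `G` such that `i(u)i(v)α = 0` for all
`u, v ∈ F`, i.e. `α` vanishes whenever two distinct of its arguments lie in `F`. -/
def Lambda1 (K G : Type*) [Field K] [AddCommGroup G] [Module K G]
    (F : Submodule K G) (m : ℕ) : Submodule K (G [⋀^Fin m]→ₗ[K] K) where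
  carrier := {α | ∀ (x : Fin m → G) (i j : Fin m), i ≠ j → x i ∈ F → x j ∈ F → α x = 0}
  add_mem' := by
    intro a b ha hb x i j hij hi hj
    simp [ha x i j hij hi hj, hb x i j hij hi hj]
  zero_mem' := by intro x i j _ _ _; simp
  smul_mem' := by
    intro c a ha x i j hij hi hj
    simp [ha x i j hij hi hj]

/-- If `τ` is injective and every value of `σ` is a value of `τ` (maps out of `Fin m`),
and `σ` is injective, then `σ = τ ∘ π` for a permutation `π`. -/
lemma exists_comp_perm {m : ℕ} {ι : Type*} {σ τ : Fin m → ι}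
    (hσ : Function.Injective σ) (hτ : Function.Injective τ)
    (h : ∀ l, ∃ k, τ k = σ l) :
    ∃ π : Equiv.Perm (Fin m), ∀ l, τ (π l) = σ l := by
  choose π hπ using h
  have hinj : Function.Injective π := by
    intro a b hab
    apply hσ
    rw [← hπ a, ← hπ b, hab]
  have hbij : Function.Bijective π := (Finite.injective_iff_bijective).mp hinj
  exact ⟨Equiv.ofBijective π hbij, fun l => hπ l⟩

lemma altmap_sum_apply {K G : Type*} [Field K] [AddCommGroup G] [Module K G] {m : ℕ}
    {ι : Type*} (s : Finset ι) (f : ι → (G [⋀^Fin m]→ₗ[K] K)) (v : Fin m → G) :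
    (∑ i ∈ s, f i) v = ∑ i ∈ s, f i v := by
  induction s using Finset.cons_induction with
  | empty => simp
  | cons a s ha ih => simp [Finset.sum_cons, ih]

/-- For an exact sequence `0 → F → G → H → 0` of finite-dimensional vector
spaces with `dim H = m` (here `H = G/F`), the space `Λ₁ᵐG*` of `m`-forms on `G` annihilated
by contraction with any two elements of `F` has dimension `1 + dim F · dim H`. -/
theorem stmt_6 (K G : Type*) [Field K] [AddCommGroup G] [Module K G]
    [FiniteDimensional K G] (F : Submodule K G) (m : ℕ)
    (hm : Module.finrank K (G ⧸ F) = m) :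
    Module.finrank K (Lambda1 K G F m) = 1 + Module.finrank K F * m := by
  classical
  set n := Module.finrank K F with hn
  obtain ⟨W, hc⟩ := Submodule.exists_isCompl F
  have hW : Module.finrank K W = m := by
    rw [← hm]
    exact (Submodule.quotientEquivOfIsCompl F W hc).finrank_eq.symm
  let bF : Module.Basis (Fin n) K F := Module.finBasis K F
  let bW : Module.Basis (Fin m) K W := Module.finBasisOfFinrankEq K W hW
  let e : (F × W) ≃ₗ[K] G := Submodule.prodEquivOfIsCompl F W hc
  let b : Module.Basis (Fin n ⊕ Fin m) K G := (bF.prod bW).map e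
  -- coordinates of elements of `F` along the `W`-part vanish
  have hesymm : ∀ x : G, ∀ hx : x ∈ F, e.symm x = (⟨x, hx⟩, 0) := by
    intro x hx
    rw [LinearEquiv.symm_apply_eq]
    symm
    rw [Submodule.coe_prodEquivOfIsCompl']
    simp
  have hcoord : ∀ x : G, x ∈ F → ∀ k : Fin m, b.repr x (Sum.inr k) = 0 := by
    intro x hx k
    show ((bF.prod bW).map e).repr x (Sum.inr k) = 0
    rw [Module.Basis.map_repr]
    simp only [LinearEquiv.trans_apply]
    rw [hesymm x hx, Module.Basis.prod_repr_inr]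
    simp
  -- the `inl` basis vectors lie in `F`
  have hbl : ∀ i : Fin n, b (Sum.inl i) ∈ F := by
    intro i
    show e ((bF.prod bW) (Sum.inl i)) ∈ F
    have h1 : (bF.prod bW) (Sum.inl i) = (bF i, 0) :=
      Prod.ext (Module.Basis.prod_apply_inl_fst bF bW i) (Module.Basis.prod_apply_inl_snd bF bW i)
    rw [h1]
    show ((bF i : G) + ((0 : W) : G)) ∈ F
    simp
  -- the determinant forms
  let D : (Fin m → Fin n ⊕ Fin m) → (G [⋀^Fin m]→ₗ[K] K) := fun r =>
    (Matrix.detRowAlternating).compLinearMap (LinearMap.pi fun k => b.coord (r k))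
  have hD : ∀ (r : Fin m → Fin n ⊕ Fin m) (x : Fin m → G),
      D r x = Matrix.det (Matrix.of fun l k => b.repr (x l) (r k)) := by
    intro r x
    rfl
  have hentry : ∀ (j j' : Fin n ⊕ Fin m), b.repr (b j) j' = if j = j' then 1 else 0 := by
    intro j j'
    rw [Module.Basis.repr_self, Finsupp.single_apply]
  -- diagonal evaluation
  have hD_diag : ∀ r : Fin m → Fin n ⊕ Fin m, Function.Injective r →
      D r (fun l => b (r l)) = 1 := by
    intro r hr
    rw [hD]
    have : (Matrix.of fun l k => b.repr (b (r l)) (r k)) = 1 := by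
      ext l k
      rw [Matrix.of_apply, hentry, Matrix.one_apply]
      simp [hr.eq_iff]
    rw [this, Matrix.det_one]
  -- off-range evaluation
  have hD_zero : ∀ (r σ : Fin m → Fin n ⊕ Fin m), (∃ l, ∀ k, σ l ≠ r k) →
      D r (fun l => b (σ l)) = 0 := by
    intro r σ ⟨l, hl⟩
    rw [hD]
    apply Matrix.det_eq_zero_of_row_eq_zero l
    intro k
    rw [Matrix.of_apply, hentry, if_neg (hl k)]
  -- the special index tuples
  let τ : Fin n → Fin m → Fin m → (Fin n ⊕ Fin m) := fun i j k =>
    if k = j then Sum.inl i else Sum.inr k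
  have hτinj : ∀ i j, Function.Injective (τ i j) := by
    intro i j a c hac
    by_cases ha : a = j <;> by_cases hb : c = j <;>
      simp [τ, ha, hb] at hac <;> simp [ha, hb, hac]
  -- membership of the determinant forms in `Lambda1`
  have hmem_inr : D Sum.inr ∈ Lambda1 K G F m := by
    intro x i j hij hxi hxj
    rw [hD]
    apply Matrix.det_eq_zero_of_row_eq_zero i
    intro k
    exact hcoord (x i) hxi k
  have hmemτ : ∀ i0 j0, D (τ i0 j0) ∈ Lambda1 K G F m := by
    intro i0 j0 x a c hac hxa hxc
    let d : (Fin m → K) [⋀^Fin m]→ₗ[K] K := Matrix.detRowAlternating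
    let v : Fin m → Fin m → K := fun l k => b.repr (x l) (τ i0 j0 k)
    have hDv : D (τ i0 j0) x = d v := rfl
    let s : Fin m → K := Pi.single j0 (1 : K)
    have key : ∀ l, x l ∈ F → v l = (b.repr (x l) (Sum.inl i0)) • s := by
      intro l hl
      funext k
      by_cases h : k = j0
      · subst h
        simp [v, s, τ, Pi.single_apply]
      · simp [v, s, τ, h, Pi.single_apply, hcoord (x l) hl]
    rw [hDv]
    have hva := key a hxa
    have hvc := key c hxc
    set ca := b.repr (x a) (Sum.inl i0)
    set cc := b.repr (x c) (Sum.inl i0)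
    have e1 : d v = d (Function.update v a (ca • s)) := by
      rw [← hva, Function.update_eq_self]
    have e2 : d (Function.update v a (ca • s)) = ca • d (Function.update v a s) :=
      d.map_update_smul v a ca s
    have e3 : d (Function.update v a s)
        = cc • d (Function.update (Function.update v a s) c s) := by
      conv_lhs => rw [← Function.update_eq_self c (Function.update v a s)]
      rw [Function.update_of_ne (Ne.symm hac), hvc, d.map_update_smul]
    have e4 : d (Function.update (Function.update v a s) c s) = 0 := by
      apply d.map_eq_zero_of_eq _ _ hac
      rw [Function.update_of_ne hac, Function.update_self, Function.update_self]
    rw [e1, e2, e3, e4, smul_zero, smul_zero]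
  -- a form in `Lambda1` vanishing at the special tuples is zero
  have hker : ∀ α : G [⋀^Fin m]→ₗ[K] K, α ∈ Lambda1 K G F m →
      (α (fun l => b (Sum.inr l)) = 0) → (∀ i j, α (fun l => b (τ i j l)) = 0) →
      α = 0 := by
    intro α hα h0 h1
    refine Module.Basis.ext_alternating b (fun σ hσ => ?_)
    rw [AlternatingMap.zero_apply]
    by_cases hL : ∃ j0 i, σ j0 = Sum.inl i
    · obtain ⟨j0, i, hj0⟩ := hL
      by_cases htwo : ∃ l, l ≠ j0 ∧ ∃ i', σ l = Sum.inl i'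
      · -- two arguments in F
        obtain ⟨l, hl, i', hl'⟩ := htwo
        refine hα _ l j0 hl ?_ ?_
        · rw [hl']; exact hbl i'
        · rw [hj0]; exact hbl i
      · -- exactly one argument in F
        push_neg at htwo
        have hinr : ∀ l, l ≠ j0 → ∃ k, σ l = Sum.inr k := by
          intro l hl
          cases hσl : σ l with
          | inl i' => exact absurd hσl (htwo l hl i')
          | inr k => exact ⟨k, rfl⟩
        -- find a column j1 not hit by σ among the inr values
        have hj1 : ∃ j1, ∀ l, σ l ≠ Sum.inr j1 := by
          by_contra hcon
          push_neg at hcon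
          choose f hf using hcon
          have hfinj : Function.Injective f := by
            intro p q hpq
            have : Sum.inr (α := Fin n) p = Sum.inr q := by
              rw [← hf p, ← hf q, hpq]
            exact Sum.inr_injective this
          obtain ⟨p, hp⟩ := (Finite.injective_iff_surjective.mp hfinj) j0
          have hfp := hf p
          rw [hp, hj0] at hfp
          exact Sum.inl_ne_inr hfp
        obtain ⟨j1, hj1⟩ := hj1
        obtain ⟨π, hπ⟩ := exists_comp_perm hσ (hτinj i j1) (by
          intro l
          by_cases hl : l = j0
          · subst hl
            exact ⟨j1, by simp [τ, hj0]⟩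
          · obtain ⟨k, hk⟩ := hinr l hl
            have hkj1 : k ≠ j1 := by
              intro h; rw [h] at hk; exact hj1 l hk
            exact ⟨k, by simp [τ, hkj1, hk]⟩)
        have : (fun l => b (σ l)) = (fun l => b (τ i j1 l)) ∘ π := by
          funext l
          simp [Function.comp, hπ l]
        rw [this, α.map_perm, h1 i j1, smul_zero]
    · -- no argument in F: all values are inr
      push_neg at hL
      have hinr : ∀ l, ∃ k, Sum.inr k = σ l := by
        intro l
        cases hσl : σ l with
        | inl i' => exact absurd hσl (hL l i')
        | inr k => exact ⟨k, rfl⟩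
      obtain ⟨π, hπ⟩ := exists_comp_perm hσ Sum.inr_injective hinr
      have : (fun l => b (σ l)) = (fun l => b (Sum.inr l)) ∘ π := by
        funext l
        simp [Function.comp, hπ l]
      rw [this, α.map_perm, h0, smul_zero]
  -- the coordinate map
  let Φ : (Lambda1 K G F m) →ₗ[K] K × (Fin n → Fin m → K) :=
    { toFun := fun α => ((α : G [⋀^Fin m]→ₗ[K] K) (fun l => b (Sum.inr l)),
        fun i j => (α : G [⋀^Fin m]→ₗ[K] K) (fun l => b (τ i j l)))
      map_add' := by intro α β; rfl
      map_smul' := by intro c α; rfl }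
  have hΦinj : Function.Injective Φ := by
    rw [injective_iff_map_eq_zero]
    intro α hα0
    have h0 : (α : G [⋀^Fin m]→ₗ[K] K) (fun l => b (Sum.inr l)) = 0 :=
      congrArg Prod.fst hα0
    have h1 : ∀ i j, (α : G [⋀^Fin m]→ₗ[K] K) (fun l => b (τ i j l)) = 0 := by
      intro i j
      exact congrFun (congrFun (congrArg Prod.snd hα0) i) j
    exact Subtype.ext (hker α.1 α.2 h0 h1)
  -- evaluations of the determinant forms at the special tuples
  have hval1 : D Sum.inr (fun l => b (Sum.inr l)) = 1 := hD_diag _ Sum.inr_injective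
  have hval2 : ∀ i j, D (τ i j) (fun l => b (Sum.inr l)) = 0 := by
    intro i j
    apply hD_zero
    refine ⟨j, fun k => ?_⟩
    by_cases h : k = j
    · simp [τ, h]
    · simp [τ, h, Ne.symm h]
  have hval3 : ∀ i j, D Sum.inr (fun l => b (τ i j l)) = 0 := by
    intro i j
    apply hD_zero
    exact ⟨j, fun k => by simp [τ]⟩
  have hval4 : ∀ i j i' j', D (τ i' j') (fun l => b (τ i j l))
      = if i' = i ∧ j' = j then 1 else 0 := by
    intro i j i' j'
    by_cases h : i' = i ∧ j' = j
    · obtain ⟨rfl, rfl⟩ := h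
      rw [if_pos ⟨rfl, rfl⟩]
      exact hD_diag _ (hτinj i' j')
    · rw [if_neg h]
      apply hD_zero
      by_cases hj : j' = j
      · subst hj
        have hi : i' ≠ i := fun hi => h ⟨hi, rfl⟩
        refine ⟨j', fun k => ?_⟩
        by_cases hk : k = j' <;> simp [τ, hk, Ne.symm hi]
      · refine ⟨j', fun k => ?_⟩
        have hjj : j' ≠ j := hj
        by_cases hk : k = j'
        · simp [τ, hk, hjj, Ne.symm hjj]
        · simp [τ, hk, hjj, Ne.symm hjj, Ne.symm hk]
  have hΦsurj : Function.Surjective Φ := by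
    rintro ⟨c, M⟩
    let A : G [⋀^Fin m]→ₗ[K] K :=
      c • D Sum.inr + ∑ i : Fin n, ∑ j : Fin m, M i j • D (τ i j)
    have hA : A ∈ Lambda1 K G F m := by
      refine Submodule.add_mem _ (Submodule.smul_mem _ _ hmem_inr) ?_
      refine Submodule.sum_mem _ (fun i _ => ?_)
      exact Submodule.sum_mem _ (fun j _ => Submodule.smul_mem _ _ (hmemτ i j))
    refine ⟨⟨A, hA⟩, ?_⟩
    have happ : ∀ v : Fin m → G, A v
        = c * D Sum.inr v + ∑ i : Fin n, ∑ j : Fin m, M i j * D (τ i j) v := by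
      intro v
      simp only [A, AlternatingMap.add_apply, AlternatingMap.smul_apply, smul_eq_mul,
        altmap_sum_apply]
    refine Prod.ext ?_ ?_
    · show A (fun l => b (Sum.inr l)) = c
      rw [happ, hval1]
      simp [hval2]
    · funext i j
      show A (fun l => b (τ i j l)) = M i j
      rw [happ]
      simp only [hval3, hval4, mul_ite, mul_one, mul_zero]
      rw [zero_add, Finset.sum_eq_single i, Finset.sum_eq_single j]
      · simp
      · intro j' _ hj'; simp [hj']
      · intro h; exact absurd (Finset.mem_univ j) h
      · intro i' _ hi'
        exact Finset.sum_eq_zero fun j' _ => by simp [hi']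
      · intro h; exact absurd (Finset.mem_univ i) h
  -- conclude
  have equiv := LinearEquiv.ofBijective Φ ⟨hΦinj, hΦsurj⟩
  rw [equiv.finrank_eq]
  rw [Module.finrank_prod, Module.finrank_self]
  congr 1
  rw [show Module.finrank K (Fin n → Fin m → K)
      = Module.finrank K (Matrix (Fin n) (Fin m) K) from rfl,
    Module.finrank_matrix]
  simp
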